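/- Suppose Y : ℝ → ℝ satisfies Y' = -Y² + α. Then y = Y satisfies the Fordy–Gibbons travelling-wave equation y'''' - 5y²y'' + 5y'y'' - 5y(y')² + y⁵ - α²y = 0. -/

import Mathlib

/-- A Riccati solution solves the Fordy–Gibbons travelling-wave equation
`y'''' - 5y²y'' + 5y'y'' - 5y(y')² + y⁵ - α²y = 0`. -/
theorem riccati_solves_fordy_gibbons (Y : ℝ → ℝ) (α : ℝ)
    (hY : Differentiable ℝ Y)
    (hRic : ∀ z, deriv Y z = -(Y z) ^ 2 + α) :
    ∀ z, deriv (deriv (deriv (deriv Y))) z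
      - 5 * (Y z) ^ 2 * deriv (deriv Y) z
      + 5 * deriv Y z * deriv (deriv Y) z
      - 5 * Y z * (deriv Y z) ^ 2
      + (Y z) ^ 5 - α ^ 2 * Y z = 0 := by
  have H : ∀ z, HasDerivAt Y (-(Y z) ^ 2 + α) z := fun z => hRic z ▸ (hY z).hasDerivAt
  have hd1 : deriv Y = fun z => -(Y z) ^ 2 + α := funext hRic
  have H2 : ∀ z, HasDerivAt (fun z => -(Y z) ^ 2 + α)
      (2 * (Y z) ^ 3 - 2 * α * Y z) z := by
    intro z
    have : HasDerivAt (fun z => -(Y z) ^ 2 + α) _ z := (((H z).pow 2).neg).add_const α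
    convert this using 1
    ring
  have hd2 : deriv (deriv Y) = fun z => 2 * (Y z) ^ 3 - 2 * α * Y z := by
    rw [hd1]; exact funext fun z => (H2 z).deriv
  have H3 : ∀ z, HasDerivAt (fun z => 2 * (Y z) ^ 3 - 2 * α * Y z)
      (-6 * (Y z) ^ 4 + 8 * α * (Y z) ^ 2 - 2 * α ^ 2) z := by
    intro z
    have : HasDerivAt (fun z => 2 * (Y z) ^ 3 - 2 * α * Y z) _ z := (((H z).pow 3).const_mul 2).sub ((H z).const_mul (2 * α))
    convert this using 1
    ring
  have hd3 : deriv (deriv (deriv Y)) =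
      fun z => -6 * (Y z) ^ 4 + 8 * α * (Y z) ^ 2 - 2 * α ^ 2 := by
    rw [hd2]; exact funext fun z => (H3 z).deriv
  have H4 : ∀ z, HasDerivAt (fun z => -6 * (Y z) ^ 4 + 8 * α * (Y z) ^ 2 - 2 * α ^ 2)
      ((-24 * (Y z) ^ 3 + 16 * α * Y z) * (-(Y z) ^ 2 + α)) z := by
    intro z
    have : HasDerivAt (fun z => -6 * (Y z) ^ 4 + 8 * α * (Y z) ^ 2 - 2 * α ^ 2) _ z := ((((H z).pow 4).const_mul (-6 : ℝ)).add (((H z).pow 2).const_mul (8 * α))).sub_const (2 * α ^ 2)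
    convert this using 1
    ring
  have hd4 : deriv (deriv (deriv (deriv Y))) =
      fun z => (-24 * (Y z) ^ 3 + 16 * α * Y z) * (-(Y z) ^ 2 + α) := by
    rw [hd3]; exact funext fun z => (H4 z).deriv
  intro z
  rw [hd4, hd2, hRic]
  ring
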